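/- arXiv:1903.01016 — 3 statements merged into one kernel-verified Lean document; each statement's English description precedes it below -/
import Mathlib

section
/- Suppose q̄_{n,s} > 0 for all n, s. Let (w*, b*, d*, γ*) be any minimizer of problem P_τ, and write q*_{n,s} := z_{n,s}ᵀw*_n + b*_n and q*_s := (q*_{1,s},…,q*_{N,s}). Then there exist coefficient vectors a_n ∈ ℝ^S (n = 1,…,N) such that w*_n = Z_n a_n for every n, and for every scenario s satisfying ‖X q*_s + y_s‖₂ < τ, the entry a_{n,s} equals 0 for every inverter n with |q*_{n,s}| < q̄_{n,s}. -/
open Finset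

/-- Euclidean (ℓ₂) norm of a vector in ℝ^k. -/
noncomputable def e2 {k : ℕ} (v : Fin k → ℝ) : ℝ := Real.sqrt (∑ i, v i ^ 2)

/-- Inverter output `q_{n,s} = z_{n,s}ᵀ w_n + b_n` of the linear control rule. -/
noncomputable def qval {N S : ℕ} {M : Fin N → ℕ}
    (z : (n : Fin N) → Fin S → Fin (M n) → ℝ)
    (w : (n : Fin N) → Fin (M n) → ℝ) (b : Fin N → ℝ)
    (n : Fin N) (s : Fin S) : ℝ :=
  (∑ i, z n s i * w n i) + b n

/-- Voltage deviation vector `X q_s + y_s` for scenario `s`. -/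
noncomputable def vdev {N S : ℕ} {M : Fin N → ℕ}
    (X : Matrix (Fin N) (Fin N) ℝ)
    (z : (n : Fin N) → Fin S → Fin (M n) → ℝ)
    (y : Fin S → Fin N → ℝ)
    (w : (n : Fin N) → Fin (M n) → ℝ) (b : Fin N → ℝ)
    (s : Fin S) : Fin N → ℝ :=
  X.mulVec (fun n => qval z w b n s) + y s

/-- Feasibility of `(w, b, d, γ)` for problem `P_τ`. -/
def FeasTau {N S : ℕ} {M : Fin N → ℕ}
    (X : Matrix (Fin N) (Fin N) ℝ)
    (z : (n : Fin N) → Fin S → Fin (M n) → ℝ)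
    (y : Fin S → Fin N → ℝ)
    (qbar : Fin N → Fin S → ℝ) (τ : ℝ)
    (w : (n : Fin N) → Fin (M n) → ℝ) (b : Fin N → ℝ)
    (d : Fin S → ℝ) (γ : Fin N → ℝ) : Prop :=
  (∀ n s, |qval z w b n s| ≤ qbar n s) ∧
  (∀ n, e2 (w n) ≤ γ n) ∧
  (∀ s, 0 ≤ d s ∧ e2 (vdev X z y w b s) ≤ d s + τ)

/-- Objective `F(w,b,d,γ) = (1/S)·Σ_s d_s + μ·Σ_n γ_n` of problem `P_τ`. -/
noncomputable def Fobj {N S : ℕ} (μ : ℝ) (d : Fin S → ℝ) (γ : Fin N → ℝ) : ℝ :=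
  (1 / (S : ℝ)) * ∑ s, d s + μ * ∑ n, γ n

lemma continuous_e2 {k : ℕ} : Continuous (e2 (k := k)) := by
  unfold e2
  exact Real.continuous_sqrt.comp (continuous_finset_sum _ fun i _ => (continuous_apply i).pow 2)

lemma norm_eq_e2 {k : ℕ} (x : EuclideanSpace ℝ (Fin k)) :
    ‖x‖ = e2 (fun i => x i) := by
  rw [EuclideanSpace.norm_eq]; simp [e2, Real.norm_eq_abs, sq_abs]

lemma e2_eq_norm {k : ℕ} (v : Fin k → ℝ) :
    e2 v = ‖(WithLp.linearEquiv 2 ℝ (Fin k → ℝ)).symm v‖ := by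
  rw [norm_eq_e2]; rfl

/-- any minimizer of `P_τ` admits a representation `w*_n = Z_n a_n`, where
`a_{n,s} = 0` for every scenario `s` with `‖X q*_s + y_s‖₂ < τ` and every inverter `n`
with `|q*_{n,s}| < q̄_{n,s}`. -/
theorem sparsity_of_minimizer_Ptau
    {N S : ℕ} (hN : 1 ≤ N) (hS : 1 ≤ S)
    {M : Fin N → ℕ} (hM : ∀ n, 1 ≤ M n)
    (X : Matrix (Fin N) (Fin N) ℝ)
    (z : (n : Fin N) → Fin S → Fin (M n) → ℝ)
    (y : Fin S → Fin N → ℝ)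
    (qbar : Fin N → Fin S → ℝ)
    (μ τ : ℝ) (hμ : 0 < μ) (hτ : 0 < τ)
    (hqbar : ∀ n s, 0 < qbar n s)
    (w : (n : Fin N) → Fin (M n) → ℝ) (b : Fin N → ℝ)
    (d : Fin S → ℝ) (γ : Fin N → ℝ)
    (hfeas : FeasTau X z y qbar τ w b d γ)
    (hmin : ∀ w' b' d' γ', FeasTau X z y qbar τ w' b' d' γ' →
      Fobj μ d γ ≤ Fobj μ d' γ') :
    ∃ a : Fin N → Fin S → ℝ,
      (∀ n, ∀ i, w n i = ∑ s, z n s i * a n s) ∧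
      (∀ s, e2 (vdev X z y w b s) < τ →
        ∀ n, |qval z w b n s| < qbar n s → a n s = 0) := by
  classical
  suffices h : ∀ n, ∃ an : Fin S → ℝ,
      (∀ i, w n i = ∑ s, z n s i * an s) ∧
      (∀ s, e2 (vdev X z y w b s) < τ → |qval z w b n s| < qbar n s → an s = 0) by
    choose a ha1 ha2 using h
    exact ⟨a, ha1, fun s hs n hn => ha2 n s hs hn⟩
  intro n
  set L := WithLp.linearEquiv 2 ℝ (Fin (M n) → ℝ) with hL
  set Act : Fin S → Prop := fun s =>
    τ ≤ e2 (vdev X z y w b s) ∨ qbar n s ≤ |qval z w b n s| with hAct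
  set g : Fin S → EuclideanSpace ℝ (Fin (M n)) := fun s =>
    if Act s then L.symm (z n s) else 0 with hg
  set V : Submodule ℝ (EuclideanSpace ℝ (Fin (M n))) := Submodule.span ℝ (Set.range g) with hV
  set wE : EuclideanSpace ℝ (Fin (M n)) := L.symm (w n) with hwE
  have key : wE ∈ V := by
    by_contra hK
    have hv : (↑(Submodule.orthogonalProjectionOnto V wE) : EuclideanSpace ℝ (Fin (M n))) ∈ V :=
      (Submodule.orthogonalProjectionOnto V wE).2
    set v : EuclideanSpace ℝ (Fin (M n)) := ↑(Submodule.orthogonalProjectionOnto V wE) with hvdef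
    set u : EuclideanSpace ℝ (Fin (M n)) := wE - v with hu
    have huV : u ∈ Vᗮ := Submodule.sub_starProjection_mem_orthogonal (K := V) wE
    have hune : u ≠ 0 := by
      intro h0
      rw [hu, sub_eq_zero] at h0
      exact hK (h0 ▸ hv)
    have hwEvu : wE = v + u := by rw [hu]; abel
    set uf : Fin (M n) → ℝ := L u with huf
    set c : Fin S → ℝ := fun s => ∑ i, z n s i * uf i with hc
    -- inner product identity
    have hinner : ∀ s, (inner ℝ (L.symm (z n s)) u : ℝ) = c s := by
      intro s
      simp only [PiLp.inner_apply, RCLike.inner_apply, conj_trivial]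
      exact Finset.sum_congr rfl fun i _ => mul_comm _ _
    have hcA : ∀ s, Act s → c s = 0 := by
      intro s hs
      have hg_mem : g s ∈ V := Submodule.subset_span ⟨s, rfl⟩
      have h0 := Submodule.inner_right_of_mem_orthogonal hg_mem huV
      simp only [hg, if_pos hs] at h0
      rw [← hinner s, h0]
    set wn' : ℝ → (Fin (M n) → ℝ) := fun t i => w n i - t * uf i with hwn'
    -- q update lemmas
    have hqm : ∀ (t : ℝ) (s : Fin S) (m : Fin N), m ≠ n →
        qval z (Function.update w n (wn' t)) b m s = qval z w b m s := by
      intro t s m hm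
      simp [qval, Function.update_of_ne hm]
    have hqn : ∀ (t : ℝ) (s : Fin S),
        qval z (Function.update w n (wn' t)) b n s = qval z w b n s - t * c s := by
      intro t s
      simp only [qval, Function.update_self, hwn', hc]
      rw [Finset.mul_sum]
      have : ∀ i ∈ Finset.univ, z n s i * (w n i - t * uf i)
          = z n s i * w n i - t * (z n s i * uf i) := by intro i _; ring
      rw [Finset.sum_congr rfl this, Finset.sum_sub_distrib]
      ring
    have hvdev' : ∀ (t : ℝ) (s : Fin S) (i : Fin N),
        vdev X z y (Function.update w n (wn' t)) b s i
          = vdev X z y w b s i - t * c s * X i n := by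
      intro t s i
      simp only [vdev, Pi.add_apply, Matrix.mulVec, dotProduct]
      have hq : ∀ m, qval z (Function.update w n (wn' t)) b m s
          = qval z w b m s - (if m = n then t * c s else 0) := by
        intro m
        by_cases hm : m = n
        · subst hm; rw [hqn]; simp
        · rw [hqm t s m hm]; simp [hm]
      have : ∀ m ∈ Finset.univ, X i m * qval z (Function.update w n (wn' t)) b m s
          = X i m * qval z w b m s - (if m = n then X i m * (t * c s) else 0) := by
        intro m _; rw [hq m]; by_cases hm : m = n <;> simp [hm] <;> ring
      rw [Finset.sum_congr rfl this, Finset.sum_sub_distrib]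
      simp [Finset.sum_ite_eq']
      ring
    have hvdevA : ∀ (t : ℝ) (s : Fin S), Act s →
        vdev X z y (Function.update w n (wn' t)) b s = vdev X z y w b s := by
      intro t s hs
      funext i
      rw [hvdev' t s i, hcA s hs]
      ring
    -- eventual feasibility of inactive constraints
    have hEv : ∀ᶠ t in nhds (0:ℝ), ∀ s, ¬ Act s →
        |qval z w b n s - t * c s| < qbar n s ∧
        e2 (fun i => vdev X z y w b s i - t * c s * X i n) < τ := by
      rw [Filter.eventually_all]
      intro s
      by_cases hs : Act s
      · exact Filter.Eventually.of_forall (fun t h => absurd hs h)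
      · have hns := hs
        simp only [hAct, not_or, not_le] at hns
        obtain ⟨h1, h2⟩ := hns
        have hc1 : Continuous fun t : ℝ => |qval z w b n s - t * c s| :=
          (continuous_const.sub (continuous_id.mul continuous_const)).abs
        have hc2 : Continuous fun t : ℝ =>
            e2 (fun i => vdev X z y w b s i - t * c s * X i n) :=
          continuous_e2.comp (continuous_pi fun i =>
            continuous_const.sub ((continuous_id.mul continuous_const).mul continuous_const))
        have e1 : ∀ᶠ t in nhds (0:ℝ), |qval z w b n s - t * c s| < qbar n s :=
          Filter.Tendsto.eventually_lt_const (by simpa using h2) (by simpa using hc1.tendsto 0)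
        have e2' : ∀ᶠ t in nhds (0:ℝ),
            e2 (fun i => vdev X z y w b s i - t * c s * X i n) < τ :=
          Filter.Tendsto.eventually_lt_const (by simpa using h1) (by simpa using hc2.tendsto 0)
        filter_upwards [e1, e2'] with t h1' h2' _
        exact ⟨h1', h2'⟩
    obtain ⟨ε, hε, hball⟩ := Metric.eventually_nhds_iff.mp hEv
    set t : ℝ := min (ε/2) 1 with ht
    have ht0 : 0 < t := lt_min (by linarith) one_pos
    have ht1 : t ≤ 1 := min_le_right _ _
    have hPt := hball (show dist t 0 < ε by
      rw [Real.dist_eq, sub_zero, abs_of_pos ht0]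
      exact lt_of_le_of_lt (min_le_left _ _) (by linarith))
    -- strict norm decrease
    have hvu : (inner ℝ v u : ℝ) = 0 := Submodule.inner_right_of_mem_orthogonal hv huV
    have h1 : wn' t = L (wE - t • u) := by
      funext i
      show w n i - t * uf i = L (wE - t • u) i
      rw [map_sub, map_smul]
      have : L wE = w n := L.apply_symm_apply (w n)
      rw [this]
      rfl
    have hnormlt : e2 (wn' t) < γ n := by
      have hdecomp : wE - t • u = v + (1 - t) • u := by
        rw [hwEvu, sub_smul, one_smul]; abel
      have hA : ‖v + (1-t) • u‖^2 = ‖v‖^2 + (1-t)^2 * ‖u‖^2 := by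
        rw [norm_add_sq_real, real_inner_smul_right, hvu, norm_smul]
        simp only [Real.norm_eq_abs, mul_pow, sq_abs]
        ring
      have hB : ‖wE‖^2 = ‖v‖^2 + ‖u‖^2 := by
        rw [hwEvu, norm_add_sq_real, hvu]; ring
      have hu2 : 0 < ‖u‖^2 := pow_pos (norm_pos_iff.mpr hune) 2
      have hlt : ‖wE - t • u‖^2 < ‖wE‖^2 := by
        rw [hdecomp, hA, hB]
        nlinarith [mul_pos (mul_pos ht0 (show (0:ℝ) < 2 - t by linarith)) hu2]
      have hltn : ‖wE - t • u‖ < ‖wE‖ := lt_of_pow_lt_pow_left₀ 2 (norm_nonneg wE) hlt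
      calc e2 (wn' t) = ‖L.symm (wn' t)‖ := e2_eq_norm _
        _ = ‖wE - t • u‖ := by rw [h1, L.symm_apply_apply]
        _ < ‖wE‖ := hltn
        _ = e2 (w n) := by rw [e2_eq_norm (w n)]
        _ ≤ γ n := hfeas.2.1 n
    -- feasibility of the perturbed point
    have hfeas' : FeasTau X z y qbar τ (Function.update w n (wn' t)) b d
        (Function.update γ n (e2 (wn' t))) := by
      refine ⟨?_, ?_, ?_⟩
      · intro m s
        by_cases hm : m = n
        · subst hm
          by_cases hs : Act s
          · rw [hqn, hcA s hs]; simpa using hfeas.1 m s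
          · rw [hqn]; exact le_of_lt (hPt s hs).1
        · rw [hqm t s m hm]; exact hfeas.1 m s
      · intro m
        by_cases hm : m = n
        · subst hm; rw [Function.update_self, Function.update_self]
        · rw [Function.update_of_ne hm, Function.update_of_ne hm]; exact hfeas.2.1 m
      · intro s
        refine ⟨(hfeas.2.2 s).1, ?_⟩
        by_cases hs : Act s
        · rw [hvdevA t s hs]; exact (hfeas.2.2 s).2
        · have heq : vdev X z y (Function.update w n (wn' t)) b s
              = fun i => vdev X z y w b s i - t * c s * X i n := funext (hvdev' t s)
          rw [heq]
          have h3 := (hPt s hs).2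
          have hd := (hfeas.2.2 s).1
          linarith
    -- objective strictly decreases: contradiction
    have hsum : ∑ m, Function.update γ n (e2 (wn' t)) m
        = e2 (wn' t) + (∑ m, γ m - γ n) := by
      rw [Finset.sum_update_of_mem (Finset.mem_univ n)]
      congr 1
      rw [Finset.sdiff_singleton_eq_erase, Finset.sum_erase_eq_sub (Finset.mem_univ n)]
    have hstrict : Fobj μ d (Function.update γ n (e2 (wn' t))) < Fobj μ d γ := by
      unfold Fobj
      have hγlt : ∑ m, Function.update γ n (e2 (wn' t)) m < ∑ m, γ m := by
        rw [hsum]; linarith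
      have := mul_lt_mul_of_pos_left hγlt hμ
      linarith
    exact absurd (hmin _ b d _ hfeas') (not_le.mpr hstrict)
  -- extract coefficients
  obtain ⟨c, hcsum⟩ := (Submodule.mem_span_range_iff_exists_fun ℝ).mp key
  refine ⟨fun s => if Act s then c s else 0, ?_, ?_⟩
  · intro i
    have hLs := congrArg L hcsum
    rw [map_sum] at hLs
    have hLg : ∀ s ∈ Finset.univ, L (c s • g s) = if Act s then c s • z n s else 0 := by
      intro s _
      by_cases hs : Act s <;> simp [hg, hs, map_smul]
    rw [Finset.sum_congr rfl hLg, hwE, L.apply_symm_apply] at hLs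
    have hLsi := congrFun hLs i
    rw [Finset.sum_apply] at hLsi
    rw [← hLsi]
    apply Finset.sum_congr rfl
    intro s _
    by_cases hs : Act s <;> simp [hs, mul_comm]
  · intro s h1 h2
    have hns : ¬ Act s := by
      simp only [hAct, not_or, not_le]
      exact ⟨h1, h2⟩
    simp [hns]
end

section
/- If q̄_{n,s} ≥ 0 for all n, s, then problem P_τ attains its minimum: the feasible set is nonempty and there exists a feasible tuple (w*, b*, d*, γ*) such that F(w*, b*, d*, γ*) ≤ F(w, b, d, γ) for every feasible tuple (w, b, d, γ). -/
open Finset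

lemma e2_nonneg {k : ℕ} (v : Fin k → ℝ) : 0 ≤ e2 v := Real.sqrt_nonneg _

lemma abs_le_e2 {k : ℕ} (v : Fin k → ℝ) (i : Fin k) : |v i| ≤ e2 v := by
  rw [← Real.sqrt_sq_eq_abs]
  exact Real.sqrt_le_sqrt (Finset.single_le_sum (fun j _ => sq_nonneg (v j)) (mem_univ i))

section cont
variable {N S : ℕ} {M : Fin N → ℕ}

lemma cont_qval (z : (n : Fin N) → Fin S → Fin (M n) → ℝ) (n : Fin N) (s : Fin S) :
    Continuous (fun p : ((n : Fin N) → Fin (M n) → ℝ) × (Fin N → ℝ) =>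
      qval z p.1 p.2 n s) := by
  unfold qval; fun_prop

lemma cont_e2_vdev (X : Matrix (Fin N) (Fin N) ℝ)
    (z : (n : Fin N) → Fin S → Fin (M n) → ℝ) (y : Fin S → Fin N → ℝ) (s : Fin S) :
    Continuous (fun p : ((n : Fin N) → Fin (M n) → ℝ) × (Fin N → ℝ) =>
      e2 (vdev X z y p.1 p.2 s)) := by
  unfold e2 vdev qval Matrix.mulVec dotProduct
  simp only [Pi.add_apply]
  fun_prop

lemma cont_e2_fst (n : Fin N) :
    Continuous (fun p : ((n : Fin N) → Fin (M n) → ℝ) × (Fin N → ℝ) => e2 (p.1 n)) := by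
  unfold e2; fun_prop
end cont

/-- if `q̄_{n,s} ≥ 0` for all `n, s`, then `P_τ` attains its minimum. -/
theorem min_attained_Ptau
    {N S : ℕ} (hN : 1 ≤ N) (hS : 1 ≤ S)
    {M : Fin N → ℕ} (hM : ∀ n, 1 ≤ M n)
    (X : Matrix (Fin N) (Fin N) ℝ)
    (z : (n : Fin N) → Fin S → Fin (M n) → ℝ)
    (y : Fin S → Fin N → ℝ)
    (qbar : Fin N → Fin S → ℝ)
    (μ τ : ℝ) (hμ : 0 < μ) (hτ : 0 < τ)
    (hqbar : ∀ n s, 0 ≤ qbar n s) :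
    ∃ (w : (n : Fin N) → Fin (M n) → ℝ) (b : Fin N → ℝ)
      (d : Fin S → ℝ) (γ : Fin N → ℝ),
      FeasTau X z y qbar τ w b d γ ∧
      ∀ w' b' d' γ', FeasTau X z y qbar τ w' b' d' γ' →
        Fobj μ d γ ≤ Fobj μ d' γ' := by
  classical
  set E := ((n : Fin N) → Fin (M n) → ℝ) × (Fin N → ℝ) with hE
  set G : E → ℝ := fun p =>
    (1 / (S : ℝ)) * ∑ s, max 0 (e2 (vdev X z y p.1 p.2 s) - τ) +
      μ * ∑ n, e2 (p.1 n) with hG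
  have hSpos : (0:ℝ) < (S : ℝ) := by exact_mod_cast hS
  have hSinv : (0:ℝ) ≤ 1 / (S : ℝ) := by positivity
  -- G is continuous
  have hGcont : Continuous G := by
    apply Continuous.add
    · exact continuous_const.mul (continuous_finset_sum _ fun s _ =>
        continuous_const.max ((cont_e2_vdev X z y s).sub continuous_const))
    · exact continuous_const.mul (continuous_finset_sum _ fun n _ => cont_e2_fst n)
  -- G is nonnegative
  have hGnn : ∀ p : E, 0 ≤ G p := by
    intro p
    have h1 : (0:ℝ) ≤ ∑ s, max 0 (e2 (vdev X z y p.1 p.2 s) - τ) :=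
      Finset.sum_nonneg fun s _ => le_max_left _ _
    have h2 : (0:ℝ) ≤ ∑ n, e2 (p.1 n) := Finset.sum_nonneg fun n _ => e2_nonneg _
    have := mul_nonneg hSinv h1
    have := mul_nonneg hμ.le h2
    simp only [hG]; positivity
  -- key: G p ≤ Fobj for feasible tuples with control part p
  have hGle : ∀ (w' : (n : Fin N) → Fin (M n) → ℝ) (b' : Fin N → ℝ) d' γ',
      FeasTau X z y qbar τ w' b' d' γ' → G (w', b') ≤ Fobj μ d' γ' := by
    intro w' b' d' γ' hf
    obtain ⟨hq, hγ, hd⟩ := hf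
    have h1 : ∑ s, max 0 (e2 (vdev X z y w' b' s) - τ) ≤ ∑ s, d' s :=
      Finset.sum_le_sum fun s _ => max_le (hd s).1 (by linarith [(hd s).2])
    have h2 : ∑ n, e2 (w' n) ≤ ∑ n, γ' n := Finset.sum_le_sum fun n _ => hγ n
    have := mul_le_mul_of_nonneg_left h1 hSinv
    have := mul_le_mul_of_nonneg_left h2 hμ.le
    simp only [hG, Fobj]

    linarith
  set C : Set E := {p | ∀ n s, |qval z p.1 p.2 n s| ≤ qbar n s} with hC
  set G0 : ℝ := G (0, 0) with hG0
  set K : Set E := C ∩ {p | G p ≤ G0} with hK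
  have h0C : (⟨0, 0⟩ : E) ∈ C := by
    intro n s
    simp [qval]
    exact hqbar n s
  have h0K : (⟨0, 0⟩ : E) ∈ K := ⟨h0C, by simp [Set.mem_setOf_eq, hG0]⟩
  -- closedness
  have hCclosed : IsClosed C := by
    have : C = ⋂ n, ⋂ s, {p : E | |qval z p.1 p.2 n s| ≤ qbar n s} := by
      ext p; simp [hC, Set.mem_iInter]
    rw [this]
    exact isClosed_iInter fun n => isClosed_iInter fun s =>
      isClosed_le (continuous_abs.comp (cont_qval z n s)) continuous_const
  have hKclosed : IsClosed K :=
    hCclosed.inter (isClosed_le hGcont continuous_const)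
  -- bounds
  set W : ℝ := G0 / μ with hWdef
  have hW0 : 0 ≤ W := div_nonneg (hGnn _) hμ.le
  have hWK : ∀ p ∈ K, ∀ n, e2 (p.1 n) ≤ W := by
    rintro p ⟨-, hpG⟩ n
    have h1 : (0:ℝ) ≤ (1 / (S : ℝ)) * ∑ s, max 0 (e2 (vdev X z y p.1 p.2 s) - τ) :=
      mul_nonneg hSinv (Finset.sum_nonneg fun s _ => le_max_left _ _)
    have h2 : μ * ∑ m, e2 (p.1 m) ≤ G0 := by
      refine le_trans ?_ hpG
      show μ * ∑ m, e2 (p.1 m) ≤ G p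
      simp only [hG]
      exact le_add_of_nonneg_left h1
    have h3 : e2 (p.1 n) ≤ ∑ m, e2 (p.1 m) :=
      Finset.single_le_sum (fun m _ => e2_nonneg _) (mem_univ n)
    rw [hWdef, le_div_iff₀ hμ]
    calc e2 (p.1 n) * μ = μ * e2 (p.1 n) := mul_comm _ _
      _ ≤ μ * ∑ m, e2 (p.1 m) := mul_le_mul_of_nonneg_left h3 hμ.le
      _ ≤ G0 := h2
  set s0 : Fin S := ⟨0, hS⟩ with hs0
  set Bn : Fin N → ℝ := fun n => qbar n s0 + (∑ i, |z n s0 i|) * W with hBn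
  have hBn0 : ∀ n, 0 ≤ Bn n := fun n =>
    add_nonneg (hqbar n s0) (mul_nonneg (Finset.sum_nonneg fun i _ => abs_nonneg _) hW0)
  have hbK : ∀ p ∈ K, ∀ n, |p.2 n| ≤ Bn n := by
    intro p hp n
    have hq := hp.1 n s0
    have hwb : ∀ i, |p.1 n i| ≤ W := fun i => (abs_le_e2 _ i).trans (hWK p hp n)
    have hb : p.2 n = qval z p.1 p.2 n s0 - ∑ i, z n s0 i * p.1 n i := by
      simp [qval]
    rw [hb]
    calc |qval z p.1 p.2 n s0 - ∑ i, z n s0 i * p.1 n i|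
        ≤ |qval z p.1 p.2 n s0| + |∑ i, z n s0 i * p.1 n i| := abs_sub _ _
      _ ≤ qbar n s0 + (∑ i, |z n s0 i|) * W := by
          gcongr
          calc |∑ i, z n s0 i * p.1 n i| ≤ ∑ i, |z n s0 i * p.1 n i| :=
                Finset.abs_sum_le_sum_abs _ _
            _ = ∑ i, |z n s0 i| * |p.1 n i| := by simp [abs_mul]
            _ ≤ ∑ i, |z n s0 i| * W :=
                Finset.sum_le_sum fun i _ =>
                  mul_le_mul_of_nonneg_left (hwb i) (abs_nonneg _)
            _ = (∑ i, |z n s0 i|) * W := by rw [Finset.sum_mul]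
  set R : ℝ := W + ∑ n, Bn n with hR
  have hR0 : 0 ≤ R := add_nonneg hW0 (Finset.sum_nonneg fun n _ => hBn0 n)
  have hWR : W ≤ R := le_add_of_nonneg_right (Finset.sum_nonneg fun n _ => hBn0 n)
  have hBnR : ∀ n, Bn n ≤ R := fun n =>
    le_add_of_nonneg_of_le hW0 (Finset.single_le_sum (fun m _ => hBn0 m) (mem_univ n))
  -- K bounded
  have hKsub : K ⊆ Metric.closedBall (0 : E) R := by
    intro p hp
    rw [Metric.mem_closedBall, dist_zero_right, Prod.norm_def]
    apply max_le
    · rw [pi_norm_le_iff_of_nonneg hR0]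
      intro n
      rw [pi_norm_le_iff_of_nonneg hR0]
      intro i
      rw [Real.norm_eq_abs]
      exact ((abs_le_e2 _ i).trans (hWK p hp n)).trans hWR
    · rw [pi_norm_le_iff_of_nonneg hR0]
      intro n
      rw [Real.norm_eq_abs]
      exact (hbK p hp n).trans (hBnR n)
  have hKcompact : IsCompact K :=
    Metric.isCompact_of_isClosed_isBounded hKclosed
      ((Metric.isBounded_closedBall).subset hKsub)
  obtain ⟨p0, hp0K, hp0min⟩ := hKcompact.exists_isMinOn ⟨_, h0K⟩ hGcont.continuousOn
  -- the minimizer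
  refine ⟨p0.1, p0.2, fun s => max 0 (e2 (vdev X z y p0.1 p0.2 s) - τ),
    fun n => e2 (p0.1 n), ⟨?_, ?_, ?_⟩, ?_⟩
  · exact hp0K.1
  · exact fun n => le_refl _
  · intro s
    refine ⟨le_max_left _ _, ?_⟩
    have := le_max_right 0 (e2 (vdev X z y p0.1 p0.2 s) - τ)
    linarith
  · intro w' b' d' γ' hf
    have hFG : Fobj μ (fun s => max 0 (e2 (vdev X z y p0.1 p0.2 s) - τ))
        (fun n => e2 (p0.1 n)) = G p0 := by
      simp [Fobj, hG]
    rw [hFG]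
    have hstep : G p0 ≤ G (w', b') := by
      by_cases hcase : G (w', b') ≤ G0
      · exact hp0min ⟨(fun n s => (hf.1 n s)), hcase⟩
      · exact (hp0min h0K).trans (le_of_not_ge hcase)
    exact hstep.trans (hGle w' b' d' γ' hf)
end

section
/- Weak duality for P_τ: let (w, b, d, γ) be feasible for problem P_τ, and let λ̄_n, λ̲_n ∈ ℝ^S with nonnegative entries (n = 1,…,N), an N×S real matrix M with s-th column μ_s ∈ ℝ^N, and σ ∈ ℝ^S satisfy: (λ̄_n − λ̲_n)ᵀ1 = x_nᵀM1 for all n (1 the all-ones vector of length S); ‖Z_n(λ̄_n − λ̲_n − Mᵀx_n)‖₂ ≤ μ for all n; and ‖μ_s‖₂ ≤ σ_s ≤ 1/S for all s. Then −Σ_{n=1}^N (λ̄_n + λ̲_n)ᵀq̄_n − Σ_{s=1}^S μ_sᵀy_s − τ·Σ_{s=1}^S σ_s ≤ (1/S)·Σ_{s=1}^S d_s + μ·Σ_{n=1}^N γ_n. -/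
open Finset

/-- Feasibility of multipliers `(λ̄, λ̲, M, σ)` for the dual problem `D_τ`.
Here `Mm m s` is the `(m,s)` entry of the `N×S` matrix `M`, whose `s`-th column is `μ_s`. -/
def DualFeasTau {N S : ℕ} {M : Fin N → ℕ}
    (X : Matrix (Fin N) (Fin N) ℝ)
    (z : (n : Fin N) → Fin S → Fin (M n) → ℝ)
    (μ : ℝ)
    (lamU lamL : Fin N → Fin S → ℝ)
    (Mm : Fin N → Fin S → ℝ) (σ : Fin S → ℝ) : Prop :=
  (∀ n s, 0 ≤ lamU n s) ∧ (∀ n s, 0 ≤ lamL n s) ∧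
  (∀ n, ∑ s, (lamU n s - lamL n s) = ∑ m, X m n * ∑ s, Mm m s) ∧
  (∀ n, e2 (fun i => ∑ s, z n s i * (lamU n s - lamL n s - ∑ m, Mm m s * X m n)) ≤ μ) ∧
  (∀ s, e2 (fun m => Mm m s) ≤ σ s ∧ σ s ≤ 1 / (S : ℝ))

/-- Objective of the dual problem `D_τ`:
`−Σ_n (λ̄_n + λ̲_n)ᵀq̄_n − Σ_s μ_sᵀy_s − τ·Σ_s σ_s`. -/
noncomputable def DualObjTau {N S : ℕ}
    (y : Fin S → Fin N → ℝ) (qbar : Fin N → Fin S → ℝ) (τ : ℝ)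
    (lamU lamL : Fin N → Fin S → ℝ)
    (Mm : Fin N → Fin S → ℝ) (σ : Fin S → ℝ) : ℝ :=
  -(∑ n, ∑ s, (lamU n s + lamL n s) * qbar n s)
    - ∑ s, ∑ m, Mm m s * y s m - τ * ∑ s, σ s


lemma abs_inner_le_e2 {k : ℕ} (u v : Fin k → ℝ) :
    |∑ i, u i * v i| ≤ e2 u * e2 v := by
  have h := Finset.sum_mul_sq_le_sq_mul_sq Finset.univ u v
  have h2 : |∑ i, u i * v i| = Real.sqrt ((∑ i, u i * v i) ^ 2) :=
    (Real.sqrt_sq_eq_abs _).symm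
  rw [h2, e2, e2, ← Real.sqrt_mul (by positivity)]
  exact Real.sqrt_le_sqrt h

/-- weak duality for `P_τ`: every dual-feasible multiplier tuple gives a
lower bound on the primal objective at every primal-feasible point. -/
theorem weak_duality_Ptau
    {N S : ℕ} (hN : 1 ≤ N) (hS : 1 ≤ S)
    {M : Fin N → ℕ} (hM : ∀ n, 1 ≤ M n)
    (X : Matrix (Fin N) (Fin N) ℝ)
    (z : (n : Fin N) → Fin S → Fin (M n) → ℝ)
    (y : Fin S → Fin N → ℝ)
    (qbar : Fin N → Fin S → ℝ)
    (μ τ : ℝ) (hμ : 0 < μ) (hτ : 0 < τ)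
    (w : (n : Fin N) → Fin (M n) → ℝ) (b : Fin N → ℝ)
    (d : Fin S → ℝ) (γ : Fin N → ℝ)
    (hfeas : FeasTau X z y qbar τ w b d γ)
    (lamU lamL : Fin N → Fin S → ℝ)
    (Mm : Fin N → Fin S → ℝ) (σ : Fin S → ℝ)
    (hdual : DualFeasTau X z μ lamU lamL Mm σ) :
    DualObjTau y qbar τ lamU lamL Mm σ ≤ Fobj μ d γ := by
  obtain ⟨hq, hw, hd⟩ := hfeas
  obtain ⟨hU, hL, heq, hZ, hσ⟩ := hdual
  set q : Fin N → Fin S → ℝ := fun n s => qval z w b n s with hqdef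
  have hσ0 : ∀ s, 0 ≤ σ s := fun s => le_trans (e2_nonneg _) (hσ s).1
  have hγ0 : ∀ n, 0 ≤ γ n := fun n => le_trans (e2_nonneg _) (hw n)
  -- Step A
  have stepA : -(∑ n, ∑ s, (lamU n s + lamL n s) * qbar n s)
      ≤ ∑ n, ∑ s, -((lamU n s - lamL n s) * q n s) := by
    rw [← Finset.sum_neg_distrib]
    apply Finset.sum_le_sum; intro n _
    rw [← Finset.sum_neg_distrib]
    apply Finset.sum_le_sum; intro s _
    have h1 := abs_le.mp (hq n s)
    have := hU n s; have := hL n s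
    simp only [neg_le_neg_iff]
    nlinarith [h1.1, h1.2]
  -- Step B
  have stepB : -(∑ s, ∑ m, Mm m s * y s m) - τ * ∑ s, σ s
      ≤ ∑ s, ((∑ n, (∑ m, Mm m s * X m n) * q n s) + (1 / (S : ℝ)) * d s) := by
    rw [sub_eq_add_neg, ← Finset.sum_neg_distrib, ← neg_mul, Finset.mul_sum,
      ← Finset.sum_add_distrib]
    apply Finset.sum_le_sum; intro s _
    have hv : ∀ m, y s m = vdev X z y w b s m - ∑ n, X m n * q n s := by
      intro m; simp [vdev, Matrix.mulVec, dotProduct, hqdef]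
    have hre : ∑ m, Mm m s * y s m
        = (∑ m, Mm m s * vdev X z y w b s m) - ∑ n, (∑ m, Mm m s * X m n) * q n s := by
      calc ∑ m, Mm m s * y s m
          = ∑ m, (Mm m s * vdev X z y w b s m - ∑ n, (Mm m s * X m n) * q n s) := by
            apply Finset.sum_congr rfl; intro m _
            rw [hv m, mul_sub, Finset.mul_sum]
            congr 1; apply Finset.sum_congr rfl; intro n _; ring
        _ = (∑ m, Mm m s * vdev X z y w b s m) - ∑ m, ∑ n, (Mm m s * X m n) * q n s := by
            rw [Finset.sum_sub_distrib]
        _ = (∑ m, Mm m s * vdev X z y w b s m) - ∑ n, (∑ m, Mm m s * X m n) * q n s := by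
            rw [Finset.sum_comm]
            congr 1; apply Finset.sum_congr rfl; intro n _
            rw [Finset.sum_mul]
    have hcs : -(∑ m, Mm m s * vdev X z y w b s m) ≤ σ s * (d s + τ) := by
      have h1 := abs_inner_le_e2 (fun m => Mm m s) (vdev X z y w b s)
      have h2 := (hσ s).1
      have h3 := (hd s).2
      have h4 := e2_nonneg (vdev X z y w b s)
      have h5 : e2 (fun m => Mm m s) * e2 (vdev X z y w b s) ≤ σ s * (d s + τ) :=
        mul_le_mul h2 h3 h4 (hσ0 s)
      calc -(∑ m, Mm m s * vdev X z y w b s m)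
          ≤ |∑ m, Mm m s * vdev X z y w b s m| := neg_le_abs _
        _ ≤ e2 (fun m => Mm m s) * e2 (vdev X z y w b s) := h1
        _ ≤ σ s * (d s + τ) := h5
    have hσd : σ s * d s ≤ (1 / (S : ℝ)) * d s :=
      mul_le_mul_of_nonneg_right (hσ s).2 (hd s).1
    rw [hre]
    nlinarith
  -- Step C
  have stepC : ∀ n, ∑ s, (-((lamU n s - lamL n s) * q n s)
      + (∑ m, Mm m s * X m n) * q n s) ≤ μ * γ n := by
    intro n
    set α : Fin S → ℝ := fun s => lamU n s - lamL n s - ∑ m, Mm m s * X m n with hα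
    have hsumα : ∑ s, α s = 0 := by
      have h2 : ∑ s, ∑ m, Mm m s * X m n = ∑ m, X m n * ∑ s, Mm m s := by
        rw [Finset.sum_comm]
        apply Finset.sum_congr rfl; intro m _
        rw [Finset.mul_sum]; apply Finset.sum_congr rfl; intro s _; ring
      have h := heq n
      rw [Finset.sum_sub_distrib] at h
      simp only [hα, Finset.sum_sub_distrib, h2]
      linarith
    have hre : ∑ s, (-((lamU n s - lamL n s) * q n s)
        + (∑ m, Mm m s * X m n) * q n s)
        = -(∑ i, (∑ s, z n s i * α s) * w n i) := by
      calc ∑ s, (-((lamU n s - lamL n s) * q n s) + (∑ m, Mm m s * X m n) * q n s)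
          = ∑ s, (-(∑ i, α s * (z n s i * w n i)) - α s * b n) := by
            apply Finset.sum_congr rfl; intro s _
            have hq2 : α s * q n s = (∑ i, α s * (z n s i * w n i)) + α s * b n := by
              simp only [hqdef, qval, mul_add, Finset.mul_sum]
            have h1 : -((lamU n s - lamL n s) * q n s) + (∑ m, Mm m s * X m n) * q n s
                = -(α s * q n s) := by simp only [hα]; ring
            rw [h1, hq2]; ring
        _ = -(∑ s, ∑ i, α s * (z n s i * w n i)) - (∑ s, α s) * b n := by
            rw [Finset.sum_sub_distrib, Finset.sum_neg_distrib, Finset.sum_mul]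
        _ = -(∑ i, (∑ s, z n s i * α s) * w n i) := by
            rw [hsumα, zero_mul, sub_zero]
            congr 1
            rw [Finset.sum_comm]
            apply Finset.sum_congr rfl; intro i _
            rw [Finset.sum_mul]
            apply Finset.sum_congr rfl; intro s _; ring
    rw [hre]
    have h1 := abs_inner_le_e2 (fun i => ∑ s, z n s i * α s) (w n)
    have h2 : e2 (fun i => ∑ s, z n s i * α s) ≤ μ := hZ n
    have h3 := hw n
    have h4 := e2_nonneg (w n)
    have h5 : e2 (fun i => ∑ s, z n s i * α s) * e2 (w n) ≤ μ * γ n :=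
      mul_le_mul h2 h3 h4 hμ.le
    calc -(∑ i, (∑ s, z n s i * α s) * w n i)
        ≤ |∑ i, (∑ s, z n s i * α s) * w n i| := neg_le_abs _
      _ ≤ e2 (fun i => ∑ s, z n s i * α s) * e2 (w n) := h1
      _ ≤ μ * γ n := h5
  -- combine
  have hsplit : ∑ s, ((∑ n, (∑ m, Mm m s * X m n) * q n s) + (1 / (S : ℝ)) * d s)
      = (∑ n, ∑ s, (∑ m, Mm m s * X m n) * q n s) + (1 / (S : ℝ)) * ∑ s, d s := by
    rw [Finset.sum_add_distrib, Finset.sum_comm, Finset.mul_sum]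
  have hmerge : (∑ n, ∑ s, -((lamU n s - lamL n s) * q n s))
      + (∑ n, ∑ s, (∑ m, Mm m s * X m n) * q n s)
      = ∑ n, ∑ s, (-((lamU n s - lamL n s) * q n s) + (∑ m, Mm m s * X m n) * q n s) := by
    rw [← Finset.sum_add_distrib]
    apply Finset.sum_congr rfl; intro n _
    rw [← Finset.sum_add_distrib]
  have sumC : ∑ n, ∑ s, (-((lamU n s - lamL n s) * q n s)
      + (∑ m, Mm m s * X m n) * q n s) ≤ ∑ n, μ * γ n :=
    Finset.sum_le_sum (fun n _ => stepC n)
  have hAB := add_le_add stepA stepB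
  rw [hsplit] at hAB
  have hFobj : Fobj μ d γ = (∑ n, μ * γ n) + (1 / (S : ℝ)) * ∑ s, d s := by
    rw [Fobj, ← Finset.mul_sum]; ring
  have hDO : DualObjTau y qbar τ lamU lamL Mm σ
      = -(∑ n, ∑ s, (lamU n s + lamL n s) * qbar n s)
        + (-(∑ s, ∑ m, Mm m s * y s m) - τ * ∑ s, σ s) := by
    rw [DualObjTau]; ring
  rw [hDO, hFobj]
  linarith [hAB, sumC, hmerge.le, hmerge.ge]
end
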